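/- Let β ∈ F^{r−1} be a row vector. Then for every integer n ≥ 1 there exists a constant c_n > 0 such that for every ω' ∈ Ω^{r−1}_n one has |e_{Λ'ω'}(βω')| < c_n, and for every ω₁ ∈ C_∞ with d(ω₁, F_∞^{r−1}ω') ≥ c_n one has |e_{Λ'ω'}(ω₁)| ≥ c_n > |e_{Λ'ω'}(βω')|, hence |e_{Λ'ω'}(βω')·u_{ω'}(ω₁)| < 1. -/

import Mathlib

noncomputable section

namespace Paper

/-- The sup-norm `|ω| = max_i |ω_i|` of a vector. -/
noncomputable def supNorm {K : Type*} [NormedField K] {m : ℕ} (ω : Fin m → K) : ℝ :=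
  ⨆ i, ‖ω i‖

/-- A linear form with coefficients `ℓ i` in `F_∞` is unimodular if its largest
coefficient has absolute value `1`. -/
def Unimodular {K : Type*} [NormedField K] (Finf : Subfield K) {m : ℕ} (ℓ : Fin m → K) : Prop :=
  (∀ i, ℓ i ∈ Finf) ∧ supNorm ℓ = 1

/-- `h(ω) = |ω|⁻¹ · inf {|ℓ(ω)| : ℓ a unimodular F_∞-linear form}`. -/
noncomputable def hOm {K : Type*} [NormedField K] (Finf : Subfield K) {m : ℕ}
    (ω : Fin m → K) : ℝ :=
  (supNorm ω)⁻¹ *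
    sInf {x : ℝ | ∃ ℓ : Fin m → K, Unimodular Finf ℓ ∧ x = ‖∑ i, ℓ i * ω i‖}

/-- The Drinfeld period domain `Ω^{m+1}`: vectors with `F_∞`-linearly independent entries
and last entry `ξ`. -/
def Omega {K : Type*} [NormedField K] (Finf : Subfield K) (ξ : K) (m : ℕ) :
    Set (Fin (m + 1) → K) :=
  {ω | (∀ c : Fin (m + 1) → K, (∀ i, c i ∈ Finf) → ∑ i, c i * ω i = 0 → ∀ i, c i = 0) ∧
    ω (Fin.last m) = ξ}

/-- `Ω^{m+1}_n = {ω ∈ Ω^{m+1} : h(ω) ≥ |π|^n}` where `|π| = q⁻¹`. -/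
def OmegaN {K : Type*} [NormedField K] (Finf : Subfield K) (ξ : K) (q : ℕ) (m n : ℕ) :
    Set (Fin (m + 1) → K) :=
  {ω | ω ∈ Omega Finf ξ m ∧ ((q : ℝ))⁻¹ ^ n ≤ hOm Finf ω}

/-- The automorphy factor `j(γ,ω) = ξ⁻¹·(last entry of γω)`. -/
noncomputable def jmap {K : Type*} [NormedField K] (ξ : K) {m : ℕ}
    (γ : Matrix (Fin (m + 1)) (Fin (m + 1)) K) (ω : Fin (m + 1) → K) : K :=
  ξ⁻¹ * (γ.mulVec ω) (Fin.last m)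

/-- The action `γ(ω) = j(γ,ω)⁻¹·γω` of `GL_{m+1}(F_∞)` on `Ω^{m+1}`. -/
noncomputable def gact {K : Type*} [NormedField K] (ξ : K) {m : ℕ}
    (γ : Matrix (Fin (m + 1)) (Fin (m + 1)) K) (ω : Fin (m + 1) → K) : Fin (m + 1) → K :=
  fun i => (jmap ξ γ ω)⁻¹ * (γ.mulVec ω) i

/-- A subgroup `H` of `(K,+)` is strongly discrete if its intersection with every ball of
finite radius is finite. -/
def StronglyDiscrete {K : Type*} [NormedField K] (H : AddSubgroup K) : Prop :=
  ∀ ρ : ℝ, 0 < ρ → {z : K | z ∈ H ∧ ‖z‖ ≤ ρ}.Finite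

/-- The exponential function `e_H(z) = z·∏_{h ∈ H∖{0}} (1 − z/h)` associated to a strongly
discrete subgroup `H ⊂ K`. -/
noncomputable def eH {K : Type*} [NormedField K] (H : AddSubgroup K) (z : K) : K :=
  z * ∏' h : {x : K // x ∈ H ∧ x ≠ 0}, (1 - z / h.1)

/-- The additive homomorphism `λ' ↦ λ'ω' = ∑ i, λ'_i ω'_i` (matrix product of a row vector
with a column vector).  `Λ'ω'` is its image `Λ'.map (pairHom ω')`. -/
def pairHom {K : Type*} [NormedField K] {m : ℕ} (ω' : Fin m → K) : (Fin m → K) →+ K where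
  toFun lam := ∑ i, lam i * ω' i
  map_zero' := by simp
  map_add' x y := by simp [add_mul, Finset.sum_add_distrib]

/-- `F_∞^{m}ω' = {xω' : x ∈ F_∞^m} ⊂ K`. -/
def Fspan {K : Type*} [NormedField K] (Finf : Subfield K) {m : ℕ} (ω' : Fin m → K) : Set K :=
  {z | ∃ c : Fin m → K, (∀ i, c i ∈ Finf) ∧ z = ∑ i, c i * ω' i}

/-- `A^m ⊂ K^m`, the additive group of vectors with entries in `A`. -/
def Avec {K : Type*} [NormedField K] (A : Subring K) (m : ℕ) : AddSubgroup (Fin m → K) where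
  carrier := {v | ∀ i, v i ∈ A}
  zero_mem' := by intro i; exact A.zero_mem
  add_mem' := by intro a b ha hb i; exact A.add_mem (ha i) (hb i)
  neg_mem' := by intro a ha i; exact A.neg_mem (ha i)

section Helpers

variable {K : Type*} [NormedField K] [IsUltrametricDist K]

lemma paper_norm_add_eq_right {a b : K} (h : ‖a‖ < ‖b‖) : ‖a + b‖ = ‖b‖ := by
  refine le_antisymm ((IsUltrametricDist.norm_add_le_max a b).trans (max_le h.le le_rfl)) ?_
  by_contra hc
  push_neg at hc
  have h2 : ‖b‖ ≤ max ‖a + b‖ ‖a‖ := by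
    have := IsUltrametricDist.norm_add_le_max (a + b) (-a)
    simpa using this
  rcases max_cases ‖a + b‖ ‖a‖ with ⟨he, _⟩ | ⟨he, _⟩ <;> rw [he] at h2 <;> linarith

lemma paper_norm_one_sub {u : K} (h : ‖u‖ < 1) : ‖1 - u‖ = 1 := by
  have : (1 : K) - u = -u + 1 := by ring
  rw [this, paper_norm_add_eq_right (by simpa using h)]
  simp

lemma le_supNorm {m : ℕ} (ω : Fin m → K) (i : Fin m) : ‖ω i‖ ≤ supNorm ω := by
  unfold supNorm
  exact le_ciSup (f := fun i => ‖ω i‖) (Set.Finite.bddAbove (Set.finite_range _)) i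

lemma supNorm_nonneg {m : ℕ} (ω : Fin m → K) : 0 ≤ supNorm ω := by
  rcases Nat.eq_zero_or_pos m with rfl | hm
  · simp [supNorm, Real.iSup_of_isEmpty]
  · exact le_trans (norm_nonneg _) (le_supNorm ω ⟨0, hm⟩)

lemma exists_supNorm_eq {m : ℕ} (ω : Fin (m + 1) → K) : ∃ i, supNorm ω = ‖ω i‖ := by
  obtain ⟨i, hi⟩ := Finite.exists_max (fun i => ‖ω i‖)
  exact ⟨i, le_antisymm (ciSup_le hi) (le_supNorm ω i)⟩

lemma supNorm_le {m : ℕ} (ω : Fin (m + 1) → K) {C : ℝ} (h : ∀ i, ‖ω i‖ ≤ C) :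
    supNorm ω ≤ C := ciSup_le h

end Helpers

section Poly

variable {K : Type*} [NormedField K] [IsUltrametricDist K]

/-- The subring of polynomial expressions in `t` with coefficients in `Fq`. -/
def polyRing (Fq : Subfield K) (t : K) : Subring K where
  carrier := {x | ∃ P : Polynomial K, (∀ n, P.coeff n ∈ Fq) ∧ x = Polynomial.eval t P}
  zero_mem' := ⟨0, fun n => by simp only [Polynomial.coeff_zero]; exact zero_mem _, by simp⟩
  one_mem' := ⟨1, fun n => by
    rw [Polynomial.coeff_one]
    split
    exacts [one_mem _, zero_mem _], by simp⟩
  add_mem' := by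
    rintro x y ⟨P, hP, rfl⟩ ⟨Q, hQ, rfl⟩
    exact ⟨P + Q, fun n => by simpa using add_mem (hP n) (hQ n), by simp⟩
  mul_mem' := by
    rintro x y ⟨P, hP, rfl⟩ ⟨Q, hQ, rfl⟩
    refine ⟨P * Q, fun n => ?_, by simp⟩
    rw [Polynomial.coeff_mul]
    exact sum_mem fun c _ => mul_mem (hP _) (hQ _)
  neg_mem' := by
    rintro x ⟨P, hP, rfl⟩
    exact ⟨-P, fun n => by simpa using neg_mem (hP n), by simp⟩

lemma norm_eval_le {Fq : Subfield K} (hFqn : ∀ x ∈ Fq, ‖x‖ ≤ 1) {t : K} {qR : ℝ}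
    (hq1 : 1 ≤ qR) (ht : ‖t‖ = qR) (P : Polynomial K) (hP : ∀ n, P.coeff n ∈ Fq) :
    ‖Polynomial.eval t P‖ ≤ qR ^ P.natDegree := by
  rw [Polynomial.eval_eq_sum_range]
  refine IsUltrametricDist.norm_sum_le_of_forall_le_of_nonneg (by positivity) ?_
  intro i hi
  rw [norm_mul, norm_pow, ht]
  calc ‖P.coeff i‖ * qR ^ i ≤ 1 * qR ^ P.natDegree := by
        refine mul_le_mul (hFqn _ (hP i)) (pow_le_pow_right₀ hq1 ?_) (by positivity) zero_le_one
        exact Nat.lt_succ_iff.mp (Finset.mem_range.mp hi)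
    _ = qR ^ P.natDegree := one_mul _

lemma norm_eval_eq {Fq : Subfield K} (hFqn : ∀ x ∈ Fq, ‖x‖ ≤ 1)
    (hFq1 : ∀ x ∈ Fq, x ≠ 0 → ‖x‖ = 1) {t : K} {qR : ℝ}
    (hq1 : 1 < qR) (ht : ‖t‖ = qR) (P : Polynomial K) (hP : ∀ n, P.coeff n ∈ Fq)
    (hP0 : P ≠ 0) : ‖Polynomial.eval t P‖ = qR ^ P.natDegree := by
  rcases Nat.eq_zero_or_pos P.natDegree with hd | hd
  · have hPc := Polynomial.eq_C_of_natDegree_eq_zero hd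
    rw [hPc, Polynomial.eval_C, Polynomial.natDegree_C, pow_zero]
    refine hFq1 _ (hP 0) ?_
    intro h0
    exact hP0 (by rw [hPc, h0, map_zero])
  · have hsplit := Polynomial.eraseLead_add_C_mul_X_pow P
    have hlc : ‖Polynomial.leadingCoeff P * t ^ P.natDegree‖ = qR ^ P.natDegree := by
      rw [norm_mul, norm_pow, ht,
        hFq1 P.leadingCoeff (by rw [Polynomial.leadingCoeff]; exact hP P.natDegree)
          (Polynomial.leadingCoeff_ne_zero.mpr hP0), one_mul]
    have hsmall : ‖Polynomial.eval t P.eraseLead‖ < qR ^ P.natDegree := by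
      rcases eq_or_ne P.eraseLead 0 with he | he
      · rw [he, Polynomial.eval_zero, norm_zero]
        exact pow_pos (lt_trans one_pos hq1) _
      · refine lt_of_le_of_lt (norm_eval_le hFqn hq1.le ht _ ?_) ?_
        · intro n
          rw [Polynomial.eraseLead_coeff]
          split
          · exact zero_mem _
          · exact hP n
        · calc qR ^ P.eraseLead.natDegree ≤ qR ^ (P.natDegree - 1) :=
                pow_le_pow_right₀ hq1.le (Polynomial.eraseLead_natDegree_le P)
            _ < qR ^ P.natDegree := by
                apply pow_lt_pow_right₀ hq1
                omega
    have hev : Polynomial.eval t P =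
        Polynomial.eval t P.eraseLead + P.leadingCoeff * t ^ P.natDegree := by
      nth_rewrite 1 [← hsplit]
      rw [Polynomial.eval_add, Polynomial.eval_mul, Polynomial.eval_pow, Polynomial.eval_C,
        Polynomial.eval_X]
    calc ‖Polynomial.eval t P‖
        = ‖Polynomial.eval t P.eraseLead + Polynomial.leadingCoeff P * t ^ P.natDegree‖ := by
          rw [hev]
      _ = ‖Polynomial.leadingCoeff P * t ^ P.natDegree‖ :=
          paper_norm_add_eq_right (by rw [hlc]; exact hsmall)
      _ = qR ^ P.natDegree := hlc

end Poly

section Finiteness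

variable {K : Type*} [NormedField K] [IsUltrametricDist K]

lemma finite_Fq {q : ℕ} (hq : 1 < q) (Fq : Subfield K)
    (hFq : (Fq : Set K) = {x : K | x ^ q = x}) : (Fq : Set K).Finite := by
  rw [hFq]
  have hne : (Polynomial.X ^ q - Polynomial.X : Polynomial K) ≠ 0 := by
    intro h
    have h2 := congrArg (fun P : Polynomial K => P.coeff q) h
    simp only [Polynomial.coeff_sub, Polynomial.coeff_X_pow, if_pos rfl,
      Polynomial.coeff_X, if_neg (Nat.ne_of_lt hq), sub_zero, Polynomial.coeff_zero] at h2
    exact one_ne_zero h2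
  refine (Polynomial.finite_setOf_isRoot hne).subset ?_
  intro x hx
  simp only [Set.mem_setOf_eq] at hx ⊢
  simp [Polynomial.IsRoot, sub_eq_zero, hx]

/-- Balls in `A` are finite. -/
lemma finite_A_ball {q : ℕ} (hq : 1 < q) (Fq : Subfield K)
    (hFq : (Fq : Set K) = {x : K | x ^ q = x})
    {t : K} (ht : ‖t‖ = (q : ℝ)) (A : Subring K)
    (hA : A = Subring.closure ((Fq : Set K) ∪ {t})) (M : ℝ) :
    {b : K | b ∈ A ∧ ‖b‖ ≤ M}.Finite := by
  have hq1 : (1 : ℝ) < (q : ℝ) := by exact_mod_cast hq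
  have hFqle : ∀ x ∈ Fq, ‖x‖ ≤ 1 := by
    intro x hx
    have hx' : x ^ q = x := by
      have : x ∈ (Fq : Set K) := hx
      rwa [hFq] at this
    by_contra hc
    push_neg at hc
    have : ‖x‖ ^ q = ‖x‖ := by rw [← norm_pow, hx']
    have h2 : ‖x‖ ^ 1 < ‖x‖ ^ q := pow_lt_pow_right₀ hc hq
    rw [pow_one, this] at h2
    exact lt_irrefl _ h2
  have hFq1 : ∀ x ∈ Fq, x ≠ 0 → ‖x‖ = 1 := by
    intro x hx hx0
    have hx' : x ^ q = x := by
      have : x ∈ (Fq : Set K) := hx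
      rwa [hFq] at this
    have hn : ‖x‖ ^ q = ‖x‖ := by rw [← norm_pow, hx']
    have hpos : 0 < ‖x‖ := norm_pos_iff.mpr hx0
    rcases lt_trichotomy ‖x‖ 1 with h | h | h
    · have := pow_lt_pow_right_of_lt_one₀ hpos h hq
      rw [hn, pow_one] at this
      exact absurd this (lt_irrefl _)
    · exact h
    · have h2 := pow_lt_pow_right₀ h hq
      rw [hn, pow_one] at h2
      exact absurd h2 (lt_irrefl _)
  -- A is contained in the polynomial ring
  have hsub : ∀ b ∈ A, b ∈ polyRing Fq t := by
    intro b hb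
    rw [hA] at hb
    refine Subring.closure_le.mpr ?_ hb
    rintro x (hx | hx)
    · exact ⟨Polynomial.C x, fun n => by
        rw [Polynomial.coeff_C]
        split
        exacts [hx, zero_mem _], by simp⟩
    · simp only [Set.mem_singleton_iff] at hx
      subst hx
      exact ⟨Polynomial.X, fun n => by
        rw [Polynomial.coeff_X]
        split
        exacts [one_mem _, zero_mem _], by simp⟩
  -- choose a degree bound
  obtain ⟨D, hD⟩ := pow_unbounded_of_one_lt M hq1
  -- the finite set of candidate polynomials
  have hFqfin : (Fq : Set K).Finite := finite_Fq hq Fq hFq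
  have hpolyfin : {P : Polynomial K | (∀ n, P.coeff n ∈ Fq) ∧ P.natDegree ≤ D}.Finite := by
    have himfin : ((fun P : Polynomial K => fun i : Fin (D + 1) => P.coeff i) ''
        {P : Polynomial K | (∀ n, P.coeff n ∈ Fq) ∧ P.natDegree ≤ D}).Finite := by
      refine (Set.Finite.pi (fun _ : Fin (D + 1) => hFqfin)).subset ?_
      rintro g ⟨P, ⟨hP, _⟩, rfl⟩
      exact fun i _ => hP i
    refine Set.Finite.of_finite_image himfin ?_
    rintro P ⟨hP, hPD⟩ Q ⟨hQ, hQD⟩ hPQ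
    ext n
    rcases le_or_gt n D with h | h
    · exact congrFun hPQ ⟨n, by omega⟩
    · rw [Polynomial.coeff_eq_zero_of_natDegree_lt (by omega),
        Polynomial.coeff_eq_zero_of_natDegree_lt (by omega)]
  refine ((hpolyfin.image (fun P => Polynomial.eval t P)).union (Set.finite_singleton 0)).subset ?_
  rintro b ⟨hb, hbM⟩
  rcases eq_or_ne b 0 with rfl | hb0
  · exact Or.inr rfl
  obtain ⟨P, hP, rfl⟩ := hsub b hb
  have hP0 : P ≠ 0 := by rintro rfl; simp at hb0
  left
  refine ⟨P, ⟨hP, ?_⟩, rfl⟩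
  have hnorm := norm_eval_eq hFqle hFq1 hq1 ht P hP hP0
  by_contra hc
  push_neg at hc
  have : (q : ℝ) ^ D < (q : ℝ) ^ P.natDegree := pow_lt_pow_right₀ hq1 hc
  rw [← hnorm] at this
  linarith

/-- Bounded subsets of a subgroup of vectors commensurable with `A^m` are finite. -/
lemma finite_vec_ball {m : ℕ} (Λ : AddSubgroup (Fin m → K)) (A : Subring K)
    (hAball : ∀ M : ℝ, {b : K | b ∈ A ∧ ‖b‖ ≤ M}.Finite)
    (hco : (Λ ⊓ Avec A m).relIndex Λ ≠ 0) (M : ℝ) :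
    {v : Fin m → K | v ∈ Λ ∧ ∀ i, ‖v i‖ ≤ M}.Finite := by
  set N := (Λ ⊓ Avec A m).addSubgroupOf Λ with hN
  haveI : Finite (↥Λ ⧸ N) := by
    rw [← not_infinite_iff_finite]
    intro h
    exact hco (AddSubgroup.index_eq_zero_iff_infinite.mpr h)
  have key : {v : Fin m → K | v ∈ Λ ∧ ∀ i, ‖v i‖ ≤ M} ⊆
      ⋃ c : ↥Λ ⧸ N, (fun a => ((Quotient.out c : ↥Λ) : Fin m → K) + a) ''
        (Set.pi Set.univ fun i =>
          {b : K | b ∈ A ∧ ‖b‖ ≤ M + ‖((Quotient.out c : ↥Λ) : Fin m → K) i‖}) := by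
    rintro v ⟨hv, hb⟩
    refine Set.mem_iUnion.mpr ⟨QuotientAddGroup.mk ⟨v, hv⟩, ?_⟩
    set x : ↥Λ := ⟨v, hv⟩ with hx
    set r : ↥Λ := Quotient.out (QuotientAddGroup.mk x) with hr
    have hrx : (QuotientAddGroup.mk r : ↥Λ ⧸ N) = QuotientAddGroup.mk x := by
      rw [hr]
      exact Quotient.out_eq _
    have hmem : -r + x ∈ N := (QuotientAddGroup.eq).mp hrx
    have hAm : ((-r + x : ↥Λ) : Fin m → K) ∈ Λ ⊓ Avec A m :=
      (AddSubgroup.mem_addSubgroupOf).mp hmem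
    have hAm2 : ∀ i, (-(r : Fin m → K) + v) i ∈ A := by
      have := (AddSubgroup.mem_inf.mp hAm).2
      intro i
      exact this i
    refine ⟨-(r : Fin m → K) + v, ?_, by show (r : Fin m → K) + _ = v; rw [add_neg_cancel_left]⟩
    intro i _
    refine ⟨hAm2 i, ?_⟩
    calc ‖(-(r : Fin m → K) + v) i‖ = ‖v i - (r : Fin m → K) i‖ := by
          simp [sub_eq_neg_add]
      _ ≤ ‖v i‖ + ‖(r : Fin m → K) i‖ := norm_sub_le _ _
      _ ≤ M + ‖(r : Fin m → K) i‖ := by gcongr; exact hb i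
  refine Set.Finite.subset ?_ key
  refine Set.finite_iUnion fun c => ?_
  exact Set.Finite.image _ (Set.Finite.pi fun i => hAball _)

lemma paper_norm_sub_le_max (a b : K) : ‖a - b‖ ≤ max ‖a‖ ‖b‖ := by
  rw [sub_eq_add_neg]
  simpa using IsUltrametricDist.norm_add_le_max a (-b)

lemma Fq_norm_le {q : ℕ} (Fq : Subfield K) (hFq : (Fq : Set K) = {x : K | x ^ q = x})
    (hq : 1 < q) : ∀ x ∈ Fq, ‖x‖ ≤ 1 := by
  intro x hx
  have hx' : x ^ q = x := by
    have : x ∈ (Fq : Set K) := hx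
    rwa [hFq] at this
  by_contra hc
  push_neg at hc
  have hn : ‖x‖ ^ q = ‖x‖ := by rw [← norm_pow, hx']
  have h2 : ‖x‖ ^ 1 < ‖x‖ ^ q := pow_lt_pow_right₀ hc hq
  rw [pow_one, hn] at h2
  exact lt_irrefl _ h2

lemma Fq_norm_eq {q : ℕ} (Fq : Subfield K) (hFq : (Fq : Set K) = {x : K | x ^ q = x})
    (hq : 1 < q) : ∀ x ∈ Fq, x ≠ 0 → ‖x‖ = 1 := by
  intro x hx hx0
  have hx' : x ^ q = x := by
    have : x ∈ (Fq : Set K) := hx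
    rwa [hFq] at this
  have hn : ‖x‖ ^ q = ‖x‖ := by rw [← norm_pow, hx']
  have hpos : 0 < ‖x‖ := norm_pos_iff.mpr hx0
  rcases lt_trichotomy ‖x‖ 1 with h | h | h
  · have h2 := pow_lt_pow_right_of_lt_one₀ hpos h hq
    rw [hn, pow_one] at h2
    exact absurd h2 (lt_irrefl _)
  · exact h
  · have h2 := pow_lt_pow_right₀ h hq
    rw [hn, pow_one] at h2
    exact absurd h2 (lt_irrefl _)

lemma A_le_polyRing (Fq : Subfield K) (t : K) :
    Subring.closure ((Fq : Set K) ∪ {t}) ≤ polyRing Fq t := by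
  refine Subring.closure_le.mpr ?_
  rintro x (hx | hx)
  · exact ⟨Polynomial.C x, fun n => by
      rw [Polynomial.coeff_C]
      split
      exacts [hx, zero_mem _], by simp⟩
  · simp only [Set.mem_singleton_iff] at hx
    subst hx
    exact ⟨Polynomial.X, fun n => by
      rw [Polynomial.coeff_X]
      split
      exacts [one_mem _, zero_mem _], by simp⟩

lemma norm_mem_A {Fq : Subfield K} (hFqn : ∀ x ∈ Fq, ‖x‖ ≤ 1)
    (hFq1 : ∀ x ∈ Fq, x ≠ 0 → ‖x‖ = 1) {t : K} {qR : ℝ} (hq1 : 1 < qR) (ht : ‖t‖ = qR)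
    {b : K} (hb : b ∈ Subring.closure ((Fq : Set K) ∪ {t})) (hb0 : b ≠ 0) :
    ∃ d : ℕ, ‖b‖ = qR ^ d := by
  obtain ⟨P, hP, hbP⟩ := A_le_polyRing Fq t hb
  subst hbP
  refine ⟨P.natDegree, norm_eval_eq hFqn hFq1 hq1 ht P hP ?_⟩
  rintro rfl
  simp at hb0

end Finiteness

section EHlemmas

variable {K : Type*} [NormedField K] [IsUltrametricDist K]

lemma eH_norm_cases (H : AddSubgroup K)
    (hHball : ∀ R : ℝ, {x : K | x ∈ H ∧ ‖x‖ ≤ R}.Finite) (z : K) :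
    ∃ T : Finset K, (∀ x : K, x ∈ T ↔ (x ∈ H ∧ x ≠ 0 ∧ ‖x‖ ≤ ‖z‖)) ∧
      (‖eH H z‖ = ‖z‖ ∨ ‖eH H z‖ = ‖z‖ * ∏ x ∈ T, ‖1 - z / x‖) := by
  classical
  have hfinT : {x : K | x ∈ H ∧ x ≠ 0 ∧ ‖x‖ ≤ ‖z‖}.Finite :=
    (hHball ‖z‖).subset (fun x hx => ⟨hx.1, hx.2.2⟩)
  refine ⟨hfinT.toFinset, fun x => by simp [Set.Finite.mem_toFinset], ?_⟩
  by_cases hm : Multipliable (fun i : {x : K // x ∈ H ∧ x ≠ 0} => 1 - z / i.1)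
  · right
    have hfinS : {i : {x : K // x ∈ H ∧ x ≠ 0} | ‖i.1‖ ≤ ‖z‖}.Finite := by
      refine (hfinT.preimage (Subtype.coe_injective.injOn)).subset ?_
      intro i hi
      exact ⟨i.2.1, i.2.2, hi⟩
    set Sfin : Finset {x : K // x ∈ H ∧ x ≠ 0} := hfinS.toFinset with hSfin
    have hone : ∀ i : {x : K // x ∈ H ∧ x ≠ 0}, i ∉ Sfin → ‖1 - z / i.1‖ = 1 := by
      intro i hi
      have hnot : ¬ ‖i.1‖ ≤ ‖z‖ := by
        rw [hSfin, Set.Finite.mem_toFinset] at hi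
        exact hi
      refine paper_norm_one_sub ?_
      rw [norm_div, div_lt_one (norm_pos_iff.mpr i.2.2)]
      push_neg at hnot
      exact hnot
    have hP := hm.hasProd
    have h3 := Filter.Tendsto.norm hP
    have hev : ∀ᶠ A : Finset {x : K // x ∈ H ∧ x ≠ 0} in Filter.atTop,
        ‖∏ i ∈ A, (1 - z / i.1)‖ = ∏ x ∈ Sfin, ‖1 - z / x.1‖ := by
      refine Filter.eventually_atTop.mpr ⟨Sfin, fun A hA => ?_⟩
      rw [← Finset.prod_sdiff hA, norm_mul, norm_prod, norm_prod,
        Finset.prod_eq_one (fun i hi => hone i (Finset.mem_sdiff.mp hi).2), one_mul]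
    have h4 : Filter.Tendsto (fun A : Finset {x : K // x ∈ H ∧ x ≠ 0} =>
        ‖∏ i ∈ A, (1 - z / i.1)‖) Filter.atTop (nhds (∏ x ∈ Sfin, ‖1 - z / x.1‖)) :=
      Filter.Tendsto.congr' (hev.mono fun A h => h.symm) tendsto_const_nhds
    have h5 : ‖∏' i : {x : K // x ∈ H ∧ x ≠ 0}, (1 - z / i.1)‖ = ∏ x ∈ Sfin, ‖1 - z / x.1‖ :=
      tendsto_nhds_unique h3 h4
    rw [eH, norm_mul, h5]
    congr 1
    refine Finset.prod_nbij (fun i => i.1) ?_ ?_ ?_ ?_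
    · intro a ha
      rw [hSfin, Set.Finite.mem_toFinset] at ha
      rw [Set.Finite.mem_toFinset]
      exact ⟨a.2.1, a.2.2, ha⟩
    · intro a _ b _ hab
      exact Subtype.ext hab
    · intro x hx
      rw [Finset.mem_coe, Set.Finite.mem_toFinset] at hx
      refine ⟨⟨x, hx.1, hx.2.1⟩, ?_, rfl⟩
      rw [Finset.mem_coe, hSfin, Set.Finite.mem_toFinset]
      exact hx.2.2
    · intro a _
      rfl
  · left
    rw [eH, tprod_eq_one_of_not_multipliable hm, mul_one]

lemma eH_lower (H : AddSubgroup K)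
    (hHball : ∀ R : ℝ, {x : K | x ∈ H ∧ ‖x‖ ≤ R}.Finite)
    {cn : ℝ} (hcn0 : 0 < cn) {ω₁ : K} (hdistH : ∀ x : K, x ∈ H → cn ≤ ‖ω₁ - x‖) :
    cn ≤ ‖eH H ω₁‖ := by
  classical
  have hω₁n : cn ≤ ‖ω₁‖ := by simpa using hdistH 0 (zero_mem H)
  obtain ⟨T, hT, hdisj⟩ := eH_norm_cases H hHball ω₁
  rcases hdisj with he | he
  · rw [he]
    exact hω₁n
  rw [he]
  rcases Finset.eq_empty_or_nonempty T with rfl | hTne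
  · simpa using hω₁n
  obtain ⟨h₀, hh₀T, hh₀min⟩ := Finset.exists_min_image T (fun x => ‖ω₁ - x‖) hTne
  have hh₀ := (hT h₀).mp hh₀T
  by_cases hcase : ‖ω₁‖ ≤ ‖ω₁ - h₀‖
  · have hfac1 : ∀ x ∈ T, (1 : ℝ) ≤ ‖1 - ω₁ / x‖ := by
      intro x hx
      obtain ⟨h1, h2, h3⟩ := (hT x).mp hx
      have hxw : ‖x‖ ≤ ‖ω₁ - x‖ := by
        calc ‖x‖ = ‖ω₁ - (ω₁ - x)‖ := by rw [sub_sub_cancel]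
          _ ≤ max ‖ω₁‖ ‖ω₁ - x‖ := paper_norm_sub_le_max _ _
          _ ≤ ‖ω₁ - x‖ := max_le (le_trans hcase (hh₀min x hx)) le_rfl
      have hrw : ‖1 - ω₁ / x‖ = ‖ω₁ - x‖ / ‖x‖ := by
        rw [show (1 : K) - ω₁ / x = (x - ω₁) / x by field_simp, norm_div, norm_sub_rev]
      rw [hrw, le_div_iff₀ (norm_pos_iff.mpr h2), one_mul]
      exact hxw
    calc cn ≤ ‖ω₁‖ := hω₁n
      _ = ‖ω₁‖ * 1 := (mul_one _).symm
      _ ≤ ‖ω₁‖ * ∏ x ∈ T, ‖1 - ω₁ / x‖ := by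
          refine mul_le_mul_of_nonneg_left ?_ (norm_nonneg _)
          calc (1 : ℝ) = ∏ _x ∈ T, (1 : ℝ) := Finset.prod_const_one.symm
            _ ≤ ∏ x ∈ T, ‖1 - ω₁ / x‖ := Finset.prod_le_prod (fun _ _ => zero_le_one) hfac1
  · push_neg at hcase
    have hprodeq : ∏ x ∈ T, ‖1 - ω₁ / x‖ = (∏ x ∈ T, ‖ω₁ - x‖) / (∏ x ∈ T, ‖x‖) := by
      rw [← Finset.prod_div_distrib]
      refine Finset.prod_congr rfl fun x hx => ?_
      obtain ⟨h1, h2, h3⟩ := (hT x).mp hx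
      rw [show (1 : K) - ω₁ / x = (x - ω₁) / x by field_simp, norm_div, norm_sub_rev]
    have hmaster : ∀ x ∈ T, ‖x - h₀‖ ≤ ‖ω₁ - x‖ := by
      intro x hx
      calc ‖x - h₀‖ = ‖(ω₁ - h₀) - (ω₁ - x)‖ := by rw [sub_sub_sub_cancel_left]
        _ ≤ max ‖ω₁ - h₀‖ ‖ω₁ - x‖ := paper_norm_sub_le_max _ _
        _ ≤ ‖ω₁ - x‖ := max_le (hh₀min x hx) le_rfl
    have hnegmem : -h₀ ∈ T := by
      rw [hT]
      exact ⟨neg_mem hh₀.1, neg_ne_zero.mpr hh₀.2.1, by rw [norm_neg]; exact hh₀.2.2⟩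
    have hbij : ∏ x ∈ T.erase h₀, ‖x - h₀‖ = ∏ x ∈ T.erase (-h₀), ‖x‖ := by
      refine Finset.prod_nbij' (fun x => x - h₀) (fun x => x + h₀) ?_ ?_ ?_ ?_ ?_
      · intro a ha
        obtain ⟨hane, haT⟩ := Finset.mem_erase.mp ha
        obtain ⟨ha1, ha2, ha3⟩ := (hT a).mp haT
        rw [Finset.mem_erase]
        constructor
        · intro hcon
          apply ha2
          have h6 := congrArg (· + h₀) hcon
          simpa using h6
        · rw [hT]
          refine ⟨sub_mem ha1 hh₀.1, sub_ne_zero.mpr hane, ?_⟩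
          exact le_trans (paper_norm_sub_le_max a h₀) (max_le ha3 hh₀.2.2)
      · intro a ha
        obtain ⟨hane, haT⟩ := Finset.mem_erase.mp ha
        obtain ⟨ha1, ha2, ha3⟩ := (hT a).mp haT
        rw [Finset.mem_erase]
        constructor
        · intro hcon
          apply ha2
          have h6 := congrArg (· - h₀) hcon
          simpa using h6
        · rw [hT]
          refine ⟨add_mem ha1 hh₀.1, ?_, ?_⟩
          · intro hcon
            apply hane
            rw [← neg_eq_of_add_eq_zero_left hcon]
          · refine le_trans (IsUltrametricDist.norm_add_le_max a h₀) (max_le ha3 hh₀.2.2)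
      · intro a _
        ring
      · intro a _
        ring
      · intro a _
        rfl
    have hkey : (∏ x ∈ T, ‖x‖) ≤ ‖ω₁‖ * ∏ x ∈ T.erase h₀, ‖ω₁ - x‖ := by
      calc (∏ x ∈ T, ‖x‖) = ‖-h₀‖ * ∏ x ∈ T.erase (-h₀), ‖x‖ :=
            (Finset.mul_prod_erase T _ hnegmem).symm
        _ = ‖h₀‖ * ∏ x ∈ T.erase h₀, ‖x - h₀‖ := by rw [norm_neg, hbij]
        _ ≤ ‖ω₁‖ * ∏ x ∈ T.erase h₀, ‖ω₁ - x‖ := by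
            refine mul_le_mul hh₀.2.2 ?_ ?_ (norm_nonneg _)
            · refine Finset.prod_le_prod (fun x _ => norm_nonneg _) (fun x hx => ?_)
              exact hmaster x (Finset.mem_erase.mp hx).2
            · exact Finset.prod_nonneg fun x _ => norm_nonneg _
    have hTprod_pos : 0 < ∏ x ∈ T, ‖x‖ :=
      Finset.prod_pos fun x hx => norm_pos_iff.mpr ((hT x).mp hx).2.1
    have hfinal : cn * (∏ x ∈ T, ‖x‖) ≤ ‖ω₁‖ * ∏ x ∈ T, ‖ω₁ - x‖ := by
      calc cn * (∏ x ∈ T, ‖x‖)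
          ≤ ‖ω₁ - h₀‖ * (‖ω₁‖ * ∏ x ∈ T.erase h₀, ‖ω₁ - x‖) := by
            refine mul_le_mul (hdistH h₀ hh₀.1) hkey ?_ (norm_nonneg _)
            exact Finset.prod_nonneg fun x _ => norm_nonneg _
        _ = ‖ω₁‖ * ∏ x ∈ T, ‖ω₁ - x‖ := by
            rw [← Finset.mul_prod_erase T (fun x => ‖ω₁ - x‖) hh₀T]
            ring
    rw [hprodeq, mul_div_assoc', le_div_iff₀ hTprod_pos]
    exact hfinal

end EHlemmas

set_option maxHeartbeats 2000000 in
/-- (From the proof of Lemma 5.6(b).)  Let `β ∈ F^{r−1}` be a row vector.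
For every `n ≥ 1` there is a constant `c_n > 0` such that for every `ω' ∈ Ω^{r−1}_n` one
has `|e_{Λ'ω'}(βω')| < c_n`, and for every `ω₁` with `d(ω₁, F_∞^{r−1}ω') ≥ c_n` one has
`|e_{Λ'ω'}(ω₁)| ≥ c_n > |e_{Λ'ω'}(βω')|`, hence `|e_{Λ'ω'}(βω')·u_{ω'}(ω₁)| < 1`. -/
theorem statement17
    (p k q : ℕ) (hp : p.Prime) (hqpk : q = p ^ k) (hk : 0 < k)
    {K : Type*} [NormedField K] [CompleteSpace K] [IsAlgClosed K] [IsUltrametricDist K]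
    [CharP K p]
    (t : K) (ht : ‖t‖ = (q : ℝ))
    (Fq : Subfield K) (hFq : (Fq : Set K) = {x : K | x ^ q = x})
    (F : Subfield K) (hF : F = Subfield.closure ((Fq : Set K) ∪ {t}))
    (A : Subring K) (hA : A = Subring.closure ((Fq : Set K) ∪ {t}))
    (Finf : Subfield K) (hFinf : (Finf : Set K) = closure (F : Set K))
    (ξ : K) (hξ : ξ ≠ 0)
    (s : ℕ) (Λ' : AddSubgroup (Fin (s + 1) → K))
    (hΛ'F : ∀ lam ∈ Λ', ∀ i, lam i ∈ F)
    (hco1 : (Λ' ⊓ Avec A (s + 1)).relIndex Λ' ≠ 0)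
    (hco2 : (Λ' ⊓ Avec A (s + 1)).relIndex (Avec A (s + 1)) ≠ 0)
    (β : Fin (s + 1) → K) (hβ : ∀ i, β i ∈ F) :
    ∀ n : ℕ, 1 ≤ n → ∃ cn : ℝ, 0 < cn ∧ ∀ ω' ∈ OmegaN Finf ξ q s n,
      ‖eH (Λ'.map (pairHom ω')) (pairHom ω' β)‖ < cn ∧
      ∀ ω₁ : K, cn ≤ Metric.infDist ω₁ (Fspan Finf ω') →
        cn ≤ ‖eH (Λ'.map (pairHom ω')) ω₁‖ ∧
        ‖eH (Λ'.map (pairHom ω')) (pairHom ω' β) * (eH (Λ'.map (pairHom ω')) ω₁)⁻¹‖ < 1 := by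
  intro n hn
  classical
  -- basic numerical facts
  have hq2 : 2 ≤ q := by
    rw [hqpk]
    calc 2 ≤ p := hp.two_le
      _ = p ^ 1 := (pow_one p).symm
      _ ≤ p ^ k := Nat.pow_le_pow_right hp.pos hk
  have hqn1 : 1 < q := by omega
  have hq1 : (1 : ℝ) < (q : ℝ) := by exact_mod_cast hqn1
  have hq0 : (0 : ℝ) < (q : ℝ) := lt_trans one_pos hq1
  have hξ0 : (0 : ℝ) < ‖ξ‖ := norm_pos_iff.mpr hξ
  have htF : t ∈ F := by
    rw [hF]
    exact Subfield.subset_closure (Or.inr rfl)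
  have hFsub : ∀ x ∈ F, x ∈ Finf := by
    intro x hx
    have h1 : x ∈ closure (F : Set K) := subset_closure hx
    rw [← hFinf] at h1
    exact h1
  have hFqle : ∀ x ∈ Fq, ‖x‖ ≤ 1 := Fq_norm_le Fq hFq hqn1
  have hFq1 : ∀ x ∈ Fq, x ≠ 0 → ‖x‖ = 1 := Fq_norm_eq Fq hFq hqn1
  have hLball : ∀ M : ℝ, {v : Fin (s + 1) → K | v ∈ Λ' ∧ ∀ i, ‖v i‖ ≤ M}.Finite :=
    fun M => finite_vec_ball Λ' A (finite_A_ball hqn1 Fq hFq ht A hA) hco1 M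
  -- norms of nonzero elements of F are integer powers of q
  have hFnorm : ∀ x ∈ F, x ≠ 0 → ∃ kk : ℤ, ‖x‖ = (q : ℝ) ^ kk := by
    intro x hx hx0
    rw [hF] at hx
    obtain ⟨y, hy, z, hz, hxyz⟩ := Subfield.mem_closure_iff.mp hx
    have hz0 : z ≠ 0 := by
      rintro rfl
      rw [div_zero] at hxyz
      exact hx0 hxyz.symm
    have hy0 : y ≠ 0 := by
      rintro rfl
      rw [zero_div] at hxyz
      exact hx0 hxyz.symm
    obtain ⟨dy, hdy⟩ := norm_mem_A hFqle hFq1 hq1 ht hy hy0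
    obtain ⟨dz, hdz⟩ := norm_mem_A hFqle hFq1 hq1 ht hz hz0
    refine ⟨(dy : ℤ) - (dz : ℤ), ?_⟩
    rw [← hxyz, norm_div, hdy, hdz, zpow_sub₀ (ne_of_gt hq0), zpow_natCast, zpow_natCast]
  -- a uniform lower bound for sup-norms of nonzero lattice vectors
  obtain ⟨m₀, hm₀pos, hm₀⟩ : ∃ m₀ : ℝ, 0 < m₀ ∧ ∀ v ∈ Λ', v ≠ 0 → m₀ ≤ supNorm v := by
    set L1f := (hLball 1).toFinset with hL1f
    by_cases hne : (L1f.filter (fun v => v ≠ 0)).Nonempty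
    · refine ⟨min 1 ((L1f.filter (fun v => v ≠ 0)).inf' hne supNorm), ?_, ?_⟩
      · rw [lt_min_iff]
        refine ⟨one_pos, ?_⟩
        rw [Finset.lt_inf'_iff]
        intro v hv
        have hv0 : v ≠ 0 := (Finset.mem_filter.mp hv).2
        obtain ⟨j, hj⟩ : ∃ j, v j ≠ 0 := by
          by_contra hc
          push_neg at hc
          exact hv0 (funext hc)
        exact lt_of_lt_of_le (norm_pos_iff.mpr hj) (le_supNorm v j)
      · intro v hvΛ hv0
        by_cases hle : ∀ i, ‖v i‖ ≤ 1
        · have hmem : v ∈ L1f.filter (fun v => v ≠ 0) := by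
            rw [Finset.mem_filter, hL1f, Set.Finite.mem_toFinset]
            exact ⟨⟨hvΛ, hle⟩, hv0⟩
          exact le_trans (min_le_right _ _) (Finset.inf'_le _ hmem)
        · push_neg at hle
          obtain ⟨i, hi⟩ := hle
          exact le_trans (min_le_left _ _) (le_trans hi.le (le_supNorm v i))
    · refine ⟨1, one_pos, ?_⟩
      intro v hvΛ hv0
      by_cases hle : ∀ i, ‖v i‖ ≤ 1
      · exact absurd ⟨v, by
          rw [Finset.mem_filter, hL1f, Set.Finite.mem_toFinset]
          exact ⟨⟨hvΛ, hle⟩, hv0⟩⟩ hne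
      · push_neg at hle
        obtain ⟨i, hi⟩ := hle
        exact le_trans hi.le (le_supNorm v i)
  -- the uniform constants
  have hβ0 : 0 ≤ supNorm β := supNorm_nonneg β
  set qn : ℝ := (q : ℝ) ^ n with hqndef
  have hqn0 : 0 < qn := pow_pos hq0 n
  set Bn : ℝ := (supNorm β + 1) * (qn * ‖ξ‖) with hBndef
  have hBn0 : 0 < Bn := by positivity
  set δ : ℝ := m₀ * ‖ξ‖ / qn with hδdef
  have hδ0 : 0 < δ := by positivity
  set Mlam : ℝ := Bn * qn / ‖ξ‖ with hMlamdef
  set Nc : ℕ := (hLball Mlam).toFinset.card with hNcdef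
  have hmax1 : (1 : ℝ) ≤ max 1 (Bn / δ) := le_max_left _ _
  have hpow1 : (1 : ℝ) ≤ (max 1 (Bn / δ)) ^ Nc := one_le_pow₀ hmax1
  set cn : ℝ := Bn * (max 1 (Bn / δ)) ^ Nc + 1 with hcndef
  have hcn0 : 0 < cn := by positivity
  refine ⟨cn, hcn0, ?_⟩
  rintro ω' ⟨⟨hωind, hωlast⟩, hωn⟩
  -- facts about ω'
  have hξsup : ‖ξ‖ ≤ supNorm ω' := by
    have h1 := le_supNorm ω' (Fin.last s)
    rwa [hωlast] at h1
  have hsuppos : 0 < supNorm ω' := lt_of_lt_of_le hξ0 hξsup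
  set SS : Set ℝ :=
    {x : ℝ | ∃ ℓ : Fin (s + 1) → K, Unimodular Finf ℓ ∧ x = ‖∑ i, ℓ i * ω' i‖} with hSSdef
  have hSSbdd : BddBelow SS := by
    refine ⟨0, ?_⟩
    rintro x ⟨ℓ, _, rfl⟩
    exact norm_nonneg _
  have hξSS : ‖ξ‖ ∈ SS := by
    refine ⟨fun i => if i = Fin.last s then 1 else 0, ⟨fun i => ?_, ?_⟩, ?_⟩
    · show (if i = Fin.last s then (1 : K) else 0) ∈ Finf
      split
      exacts [one_mem _, zero_mem _]
    · refine le_antisymm (supNorm_le _ fun i => ?_) ?_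
      · show ‖if i = Fin.last s then (1 : K) else 0‖ ≤ 1
        split <;> simp
      · have h1 := le_supNorm (fun i => if i = Fin.last s then (1 : K) else 0) (Fin.last s)
        simpa using h1
    · have h1 : ∑ i, (if i = Fin.last s then (1 : K) else 0) * ω' i = ω' (Fin.last s) := by
        simp [ite_mul]
      rw [h1, hωlast]
  have hsinf_ge : qn⁻¹ * supNorm ω' ≤ sInf SS := by
    have h2 : (q : ℝ)⁻¹ ^ n ≤ (supNorm ω')⁻¹ * sInf SS := hωn
    have h3 : qn⁻¹ ≤ (supNorm ω')⁻¹ * sInf SS := by rwa [inv_pow] at h2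
    have h4 := mul_le_mul_of_nonneg_left h3 hsuppos.le
    rw [← mul_assoc, mul_inv_cancel₀ hsuppos.ne', one_mul] at h4
    rw [mul_comm]
    exact h4
  have hsinf_le : sInf SS ≤ ‖ξ‖ := csInf_le hSSbdd hξSS
  have hsup_le : supNorm ω' ≤ qn * ‖ξ‖ := by
    have h1 := le_trans hsinf_ge hsinf_le
    calc supNorm ω' = qn * (qn⁻¹ * supNorm ω') := by
          rw [← mul_assoc, mul_inv_cancel₀ hqn0.ne', one_mul]
      _ ≤ qn * ‖ξ‖ := mul_le_mul_of_nonneg_left h1 hqn0.le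
  have hωi_le : ∀ i, ‖ω' i‖ ≤ qn * ‖ξ‖ := fun i => le_trans (le_supNorm ω' i) hsup_le
  -- lower bound for norms of lattice points
  have hlat : ∀ v, v ∈ Λ' → v ≠ 0 → supNorm v * (‖ξ‖ / qn) ≤ ‖∑ i, v i * ω' i‖ := by
    intro v hv hv0
    obtain ⟨i₀, hi₀⟩ := exists_supNorm_eq v
    have hvi₀ : v i₀ ≠ 0 := by
      intro h0
      obtain ⟨j, hj⟩ : ∃ j, v j ≠ 0 := by
        by_contra hc
        push_neg at hc
        exact hv0 (funext hc)
      have h1 := le_supNorm v j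
      rw [hi₀, h0, norm_zero] at h1
      exact hj (norm_le_zero_iff.mp h1)
    obtain ⟨kk, hkk⟩ := hFnorm (v i₀) (hΛ'F v hv i₀) hvi₀
    set ℓ : Fin (s + 1) → K := fun i => t ^ (-kk) * v i with hℓdef
    have hℓnorm : ∀ i, ‖ℓ i‖ = (q : ℝ) ^ (-kk) * ‖v i‖ := by
      intro i
      rw [hℓdef]
      simp only
      rw [norm_mul, norm_zpow, ht]
    have hvile : ∀ i, ‖v i‖ ≤ (q : ℝ) ^ kk := by
      intro i
      rw [← hkk, ← hi₀]
      exact le_supNorm v i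
    have huni : Unimodular Finf ℓ := by
      constructor
      · intro i
        exact mul_mem (zpow_mem (hFsub t htF) _) (hFsub _ (hΛ'F v hv i))
      · refine le_antisymm (supNorm_le _ fun i => ?_) ?_
        · rw [hℓnorm i]
          calc (q : ℝ) ^ (-kk) * ‖v i‖ ≤ (q : ℝ) ^ (-kk) * (q : ℝ) ^ kk :=
                mul_le_mul_of_nonneg_left (hvile i) (zpow_pos hq0 _).le
            _ = 1 := by rw [← zpow_add₀ (ne_of_gt hq0)]; simp
        · have h1 := le_supNorm ℓ i₀
          have h2 : ‖ℓ i₀‖ = 1 := by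
            rw [hℓnorm i₀, hkk, ← zpow_add₀ (ne_of_gt hq0)]
            simp
          rwa [h2] at h1
    have hmem : ‖∑ i, ℓ i * ω' i‖ ∈ SS := ⟨ℓ, huni, rfl⟩
    have hge : qn⁻¹ * supNorm ω' ≤ ‖∑ i, ℓ i * ω' i‖ :=
      le_trans hsinf_ge (csInf_le hSSbdd hmem)
    have hsum : ∑ i, ℓ i * ω' i = t ^ (-kk) * ∑ i, v i * ω' i := by
      rw [Finset.mul_sum]
      refine Finset.sum_congr rfl fun i _ => ?_
      rw [hℓdef]
      simp only
      rw [mul_assoc]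
    rw [hsum, norm_mul, norm_zpow, ht] at hge
    calc supNorm v * (‖ξ‖ / qn) = (q : ℝ) ^ kk * (qn⁻¹ * ‖ξ‖) := by
          rw [hi₀, hkk]; ring
      _ ≤ (q : ℝ) ^ kk * (qn⁻¹ * supNorm ω') := by
          refine mul_le_mul_of_nonneg_left ?_ (zpow_pos hq0 _).le
          exact mul_le_mul_of_nonneg_left hξsup (by positivity)
      _ ≤ (q : ℝ) ^ kk * ((q : ℝ) ^ (-kk) * ‖∑ i, v i * ω' i‖) :=
          mul_le_mul_of_nonneg_left hge (zpow_pos hq0 _).le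
      _ = ‖∑ i, v i * ω' i‖ := by
          rw [← mul_assoc, ← zpow_add₀ (ne_of_gt hq0)]
          simp
  -- the lattice H = Λ'ω'
  set H : AddSubgroup K := Λ'.map (pairHom ω') with hHdef
  have hpair : ∀ v : Fin (s + 1) → K, pairHom ω' v = ∑ i, v i * ω' i := fun v => rfl
  have hHlam : ∀ x : K, x ∈ H → x ≠ 0 → ∃ v, v ∈ Λ' ∧ v ≠ 0 ∧ pairHom ω' v = x ∧
      supNorm v * (‖ξ‖ / qn) ≤ ‖x‖ := by
    intro x hx hx0
    obtain ⟨v, hv, hvx⟩ := AddSubgroup.mem_map.mp hx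
    have hv0 : v ≠ 0 := by
      rintro rfl
      rw [map_zero] at hvx
      exact hx0 hvx.symm
    refine ⟨v, hv, hv0, hvx, ?_⟩
    rw [← hvx, hpair]
    exact hlat v hv hv0
  have hHδ : ∀ x : K, x ∈ H → x ≠ 0 → δ ≤ ‖x‖ := by
    intro x hx hx0
    obtain ⟨v, hv, hv0, -, hle⟩ := hHlam x hx hx0
    calc δ = m₀ * (‖ξ‖ / qn) := by rw [hδdef]; ring
      _ ≤ supNorm v * (‖ξ‖ / qn) :=
          mul_le_mul_of_nonneg_right (hm₀ v hv hv0) (by positivity)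
      _ ≤ ‖x‖ := hle
  have hsupx : ∀ x : K, x ∈ H → x ≠ 0 → ∀ v, v ∈ Λ' → pairHom ω' v = x →
      supNorm v * (‖ξ‖ / qn) ≤ ‖x‖ → supNorm v ≤ ‖x‖ * qn / ‖ξ‖ := by
    intro x hx hx0 v hv hvx hle
    have h1 := (le_div_iff₀ (show (0 : ℝ) < ‖ξ‖ / qn by positivity)).mpr hle
    rwa [div_div_eq_mul_div] at h1
  have hHball : ∀ R : ℝ, {x : K | x ∈ H ∧ ‖x‖ ≤ R}.Finite := by
    intro R
    refine Set.Finite.subset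
      (((hLball (R * qn / ‖ξ‖)).image (pairHom ω')).union (Set.finite_singleton 0)) ?_
    rintro x ⟨hx, hxR⟩
    rcases eq_or_ne x 0 with rfl | hx0
    · exact Or.inr rfl
    left
    obtain ⟨v, hv, hv0, hvx, hle⟩ := hHlam x hx hx0
    refine ⟨v, ⟨hv, fun i => ?_⟩, hvx⟩
    have h1 := hsupx x hx hx0 v hv hvx hle
    refine le_trans (le_supNorm v i) (le_trans h1 ?_)
    gcongr
  -- the upper bound at βω'
  have hz0le : ‖pairHom ω' β‖ ≤ Bn := by
    rw [hpair]
    refine IsUltrametricDist.norm_sum_le_of_forall_le_of_nonneg hBn0.le ?_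
    intro i _
    rw [norm_mul, hBndef]
    refine mul_le_mul ?_ (hωi_le i) (norm_nonneg _) (by positivity)
    exact le_trans (le_supNorm β i) (by linarith)
  have hupper : ‖eH H (pairHom ω' β)‖ < cn := by
    rcases eq_or_ne (pairHom ω' β) 0 with h0 | h0
    · rw [h0]
      have h1 : eH H 0 = 0 := by rw [eH, zero_mul]
      rw [h1, norm_zero]
      exact hcn0
    obtain ⟨T, hT, hdisj⟩ := eH_norm_cases H hHball (pairHom ω' β)
    have hTcard : T.card ≤ Nc := by
      refine Finset.card_le_card_of_injOn
        (fun x => if hx : x ∈ H ∧ x ≠ 0 then (hHlam x hx.1 hx.2).choose else 0) ?_ ?_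
      · intro x hxT
        rw [Finset.mem_coe, hT] at hxT
        obtain ⟨h1, h2, h3⟩ := hxT
        dsimp only
        rw [dif_pos (⟨h1, h2⟩ : x ∈ H ∧ x ≠ 0)]
        obtain ⟨hv, hv0, hvx, hle⟩ := (hHlam x h1 h2).choose_spec
        rw [Finset.mem_coe, Set.Finite.mem_toFinset]
        refine ⟨hv, fun i => ?_⟩
        have h4 := hsupx x h1 h2 _ hv hvx hle
        refine le_trans (le_supNorm _ i) (le_trans h4 ?_)
        rw [hMlamdef]
        gcongr
        exact le_trans h3 hz0le
      · intro x hx y hy hxy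
        rw [Finset.mem_coe, hT] at hx hy
        dsimp only at hxy
        rw [dif_pos (⟨hx.1, hx.2.1⟩ : x ∈ H ∧ x ≠ 0),
          dif_pos (⟨hy.1, hy.2.1⟩ : y ∈ H ∧ y ≠ 0)] at hxy
        have e1 := (hHlam x hx.1 hx.2.1).choose_spec.2.2.1
        have e2 := (hHlam y hy.1 hy.2.1).choose_spec.2.2.1
        rw [← e1, ← e2, hxy]
    have hfactors : ∏ x ∈ T, ‖1 - (pairHom ω' β) / x‖ ≤ (max 1 (Bn / δ)) ^ Nc := by
      calc ∏ x ∈ T, ‖1 - (pairHom ω' β) / x‖ ≤ ∏ _x ∈ T, (max 1 (Bn / δ)) := by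
            refine Finset.prod_le_prod (fun x _ => norm_nonneg _) (fun x hx => ?_)
            rw [hT] at hx
            refine le_trans (paper_norm_sub_le_max 1 _) (max_le ?_ ?_)
            · rw [norm_one]
              exact le_max_left _ _
            · rw [norm_div]
              refine le_trans ?_ (le_max_right _ _)
              exact div_le_div₀ hBn0.le hz0le hδ0 (hHδ x hx.1 hx.2.1)
        _ = (max 1 (Bn / δ)) ^ T.card := Finset.prod_const _
        _ ≤ (max 1 (Bn / δ)) ^ Nc := pow_le_pow_right₀ hmax1 hTcard
    rcases hdisj with he | he
    · rw [he]
      calc ‖pairHom ω' β‖ ≤ Bn := hz0le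
        _ < cn := by
            rw [hcndef]
            nlinarith
    · rw [he]
      calc ‖pairHom ω' β‖ * ∏ x ∈ T, ‖1 - (pairHom ω' β) / x‖
          ≤ Bn * (max 1 (Bn / δ)) ^ Nc := by
            refine mul_le_mul hz0le hfactors ?_ hBn0.le
            exact Finset.prod_nonneg fun x _ => norm_nonneg _
        _ < cn := by rw [hcndef]; linarith
  refine ⟨hupper, ?_⟩
  intro ω₁ hω₁
  have hdistH : ∀ x : K, x ∈ H → cn ≤ ‖ω₁ - x‖ := by
    intro x hx
    obtain ⟨v, hv, hvx⟩ := AddSubgroup.mem_map.mp hx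
    have hxF : x ∈ Fspan Finf ω' := ⟨v, fun i => hFsub _ (hΛ'F v hv i), by rw [← hvx, hpair]⟩
    calc cn ≤ Metric.infDist ω₁ (Fspan Finf ω') := hω₁
      _ ≤ dist ω₁ x := Metric.infDist_le_dist_of_mem hxF
      _ = ‖ω₁ - x‖ := dist_eq_norm _ _
  have hω₁n : cn ≤ ‖ω₁‖ := by simpa using hdistH 0 (zero_mem H)
  have hω₁0 : ω₁ ≠ 0 := by
    intro h
    rw [h, norm_zero] at hω₁n
    linarith
  have main : cn ≤ ‖eH H ω₁‖ := eH_lower H hHball hcn0 hdistH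
  refine ⟨main, ?_⟩
  have hbpos : 0 < ‖eH H ω₁‖ := lt_of_lt_of_le hcn0 main
  rw [norm_mul, norm_inv, ← div_eq_mul_inv, div_lt_one hbpos]
  exact lt_of_lt_of_le hupper main

end Paper
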